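/- Let c₁, c₂ be purely imaginary unit quaternions, φ₁, φ₂ ∈ (0,π), ξ₁, ξ₂ ∈ [0,π], and set t(φ,ξ) := arccos(cos²φ + sin²φ · cos ξ). If T := t(φ₁,ξ₁) + t(φ₂,ξ₂) ∈ [0,π], then the Minkowski product S(c₁,φ₁,ξ₁) ⊗ S(c₂,φ₂,ξ₂) is contained in the spherical cap U(exp(φ₁ c₁) exp(φ₂ c₂), T). -/

import Mathlib

open Real Set

noncomputable section

abbrev H : Type := Quaternion ℝ

/-- Inner product on ℍ regarded as ℝ⁴ : ⟨A,B⟩ = re(A B*). -/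
def qInner (a b : H) : ℝ := (a * star b).re

/-- The set of unit quaternions, the 3-sphere S³. -/
def S3 : Set H := {u : H | ‖u‖ = 1}

/-- Spherical cap U(U₀,t) = {U ∈ S³ : ⟨U,U₀⟩ ≥ cos t}. -/
def cap (u₀ : H) (t : ℝ) : Set H := {u : H | u ∈ S3 ∧ qInner u u₀ ≥ Real.cos t}

/-- Minkowski product of two quaternion sets. -/
def mprod (U V : Set H) : Set H := Set.image2 (· * ·) U V

/-- exp(s n) = cos s + (sin s) n for purely imaginary unit n. -/
def qexp (s : ℝ) (n : H) : H := (Real.cos s : H) + Real.sin s • n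

/-- The boundary (frontier) of A in the subspace topology of S³:
for A ⊆ S³ this coincides with the frontier taken in the topological subspace S³. -/
def bdryIn (A : Set H) : Set H := S3 ∩ closure A ∩ closure (S3 \ A)

/-- S(c,φ,ξ) = {cos φ + (sin φ) m : m purely imaginary unit, ⟨m,c⟩ ≥ cos ξ}. -/
def Sset (c : H) (φ ξ : ℝ) : Set H :=
  {u : H | ∃ m : H, m.re = 0 ∧ ‖m‖ = 1 ∧ qInner m c ≥ Real.cos ξ ∧ u = qexp φ m}

lemma qInner_eq_inner (a b : H) : qInner a b = inner ℝ a b := (Quaternion.inner_def a b).symm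

lemma re_mul_comm (a b : H) : (a * b).re = (b * a).re := by
  simp only [Quaternion.re_mul]; ring

lemma arccos_anti {x y : ℝ} (h : x ≤ y) : Real.arccos y ≤ Real.arccos x := by
  unfold Real.arccos
  linarith [Real.monotone_arcsin h]

lemma qInner_mul_right (a b w : H) (hw : ‖w‖ = 1) : qInner (a * w) (b * w) = qInner a b := by
  have hn : Quaternion.normSq w = 1 := by
    rw [Quaternion.normSq_eq_norm_mul_self, hw]; ring
  have hws : w * star w = ((1 : ℝ) : H) := by
    rw [Quaternion.self_mul_star, hn]
  simp only [qInner, StarMul.star_mul]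
  have e : a * w * (star w * star b) = a * (w * star w) * star b := by
    noncomm_ring
  rw [e, hws]
  simp

lemma qInner_mul_left (a b w : H) (hw : ‖w‖ = 1) : qInner (w * a) (w * b) = qInner a b := by
  have hn : Quaternion.normSq w = 1 := by
    rw [Quaternion.normSq_eq_norm_mul_self, hw]; ring
  have hws : star w * w = ((1 : ℝ) : H) := by
    rw [Quaternion.star_mul_self, hn]
  simp only [qInner, StarMul.star_mul]
  have e : w * a * (star b * star w) = w * (a * star b * star w) := by
    noncomm_ring
  have e2 : a * star b * star w * w = a * star b * (star w * w) := by
    noncomm_ring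
  rw [e, re_mul_comm, e2, hws]
  simp

/-- Key spherical-triangle-type estimate. -/
lemma key_est (a b c : H) (ha : ‖a‖ = 1) (hb : ‖b‖ = 1) (hc : ‖c‖ = 1) :
    qInner a c ≥ Real.cos (Real.arccos (qInner a b) + Real.arccos (qInner b c)) := by
  rw [qInner_eq_inner, qInner_eq_inner, qInner_eq_inner]
  set p : ℝ := inner ℝ a b with hp
  set q : ℝ := inner ℝ b c with hq
  have hp1 : |p| ≤ 1 := by
    have := abs_real_inner_le_norm a b; rwa [ha, hb, mul_one] at this
  have hq1 : |q| ≤ 1 := by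
    have := abs_real_inner_le_norm b c; rwa [hb, hc, mul_one] at this
  rw [Real.cos_add, Real.cos_arccos (neg_le_of_abs_le hp1) (le_of_abs_le hp1),
    Real.cos_arccos (neg_le_of_abs_le hq1) (le_of_abs_le hq1),
    Real.sin_arccos, Real.sin_arccos]
  set a' : H := a - p • b with ha'
  set c' : H := c - q • b with hc'
  have hb2 : (inner ℝ b b : ℝ) = 1 := by
    rw [real_inner_self_eq_norm_sq, hb]; norm_num
  have hab : (inner ℝ a' b : ℝ) = 0 := by
    simp [ha', inner_sub_left, real_inner_smul_left, hb2, hp, hb]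
  have hbc : (inner ℝ b c' : ℝ) = 0 := by
    simp [hc', inner_sub_right, real_inner_smul_right, hb2, hq, hb]
  have hdecomp : (inner ℝ a c : ℝ) = inner ℝ a' c' + p * q := by
    have h1 : (inner ℝ a' c' : ℝ) = inner ℝ a c - q * inner ℝ a b - p * inner ℝ b c
        + p * q * inner ℝ b b := by
      simp [ha', hc', inner_sub_left, inner_sub_right, real_inner_smul_left,
        real_inner_smul_right]
      ring
    rw [h1, hb2, hp, hq]; ring
  have hna : ‖a'‖ = Real.sqrt (1 - p ^ 2) := by
    have h2 : ‖a'‖ ^ 2 = 1 - p ^ 2 := by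
      rw [ha', norm_sub_sq_real, real_inner_smul_right, norm_smul, ha, hb]
      simp [Real.norm_eq_abs, ← hp, mul_pow, sq_abs]
      ring
    rw [← h2, Real.sqrt_sq (norm_nonneg _)]
  have hnc : ‖c'‖ = Real.sqrt (1 - q ^ 2) := by
    have h2 : ‖c'‖ ^ 2 = 1 - q ^ 2 := by
      have hcb : (inner ℝ c b : ℝ) = q := by rw [hq, real_inner_comm]
      rw [hc', norm_sub_sq_real, real_inner_smul_right, norm_smul, hc, hb, hcb]
      simp [Real.norm_eq_abs, ← hq, mul_pow, sq_abs]
      ring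
    rw [← h2, Real.sqrt_sq (norm_nonneg _)]
  have hCS : (inner ℝ a' c' : ℝ) ≥ -(‖a'‖ * ‖c'‖) := by
    have := abs_real_inner_le_norm a' c'
    linarith [neg_le_of_abs_le this]
  rw [hdecomp, hna, hnc] at *
  linarith [hCS]

lemma norm_qexp (φ : ℝ) (m : H) (hm : m.re = 0) (hm' : ‖m‖ = 1) : ‖qexp φ m‖ = 1 := by
  have h1 : Quaternion.normSq m = 1 := by
    rw [Quaternion.normSq_eq_norm_mul_self, hm']; ring
  have h2 : Quaternion.normSq (qexp φ m) = 1 := by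
    simp only [Quaternion.normSq_def', qexp, Quaternion.re_add, Quaternion.imI_add,
      Quaternion.imJ_add, Quaternion.imK_add, Quaternion.re_coe, Quaternion.imI_coe,
      Quaternion.imJ_coe, Quaternion.imK_coe, Quaternion.re_smul, Quaternion.imI_smul,
      Quaternion.imJ_smul, Quaternion.imK_smul, hm, smul_eq_mul] at h1 ⊢
    nlinarith [Real.sin_sq_add_cos_sq φ]
  have := Quaternion.normSq_eq_norm_mul_self (qexp φ m)
  rw [h2] at this
  nlinarith [norm_nonneg (qexp φ m)]

lemma qInner_qexp (φ : ℝ) (m c : H) (hm : m.re = 0) (hc : c.re = 0) :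
    qInner (qexp φ m) (qexp φ c) = Real.cos φ ^ 2 + Real.sin φ ^ 2 * qInner m c := by
  simp only [qInner, qexp, Quaternion.re_mul, Quaternion.re_add, Quaternion.imI_add,
    Quaternion.imJ_add, Quaternion.imK_add, Quaternion.re_coe, Quaternion.imI_coe,
    Quaternion.imJ_coe, Quaternion.imK_coe, Quaternion.re_smul, Quaternion.imI_smul,
    Quaternion.imJ_smul, Quaternion.imK_smul, Quaternion.re_star, Quaternion.imI_star,
    Quaternion.imJ_star, Quaternion.imK_star, hm, hc, smul_eq_mul]
  ring

lemma cos_bound (φ ξ : ℝ) :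
    -1 ≤ Real.cos φ ^ 2 + Real.sin φ ^ 2 * Real.cos ξ ∧
    Real.cos φ ^ 2 + Real.sin φ ^ 2 * Real.cos ξ ≤ 1 := by
  constructor <;>
    nlinarith [Real.sin_sq_add_cos_sq φ, Real.neg_one_le_cos ξ, Real.cos_le_one ξ,
      sq_nonneg (Real.sin φ)]

theorem stmt13 (c₁ c₂ : H) (hc₁ : c₁.re = 0) (hc₁' : ‖c₁‖ = 1)
    (hc₂ : c₂.re = 0) (hc₂' : ‖c₂‖ = 1)
    (φ₁ φ₂ : ℝ) (hφ₁ : φ₁ ∈ Set.Ioo 0 π) (hφ₂ : φ₂ ∈ Set.Ioo 0 π)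
    (ξ₁ ξ₂ : ℝ) (hξ₁ : ξ₁ ∈ Set.Icc 0 π) (hξ₂ : ξ₂ ∈ Set.Icc 0 π)
    (hT : Real.arccos (Real.cos φ₁ ^ 2 + Real.sin φ₁ ^ 2 * Real.cos ξ₁)
        + Real.arccos (Real.cos φ₂ ^ 2 + Real.sin φ₂ ^ 2 * Real.cos ξ₂) ∈ Set.Icc 0 π) :
    mprod (Sset c₁ φ₁ ξ₁) (Sset c₂ φ₂ ξ₂) ⊆
      cap (qexp φ₁ c₁ * qexp φ₂ c₂)
        (Real.arccos (Real.cos φ₁ ^ 2 + Real.sin φ₁ ^ 2 * Real.cos ξ₁)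
          + Real.arccos (Real.cos φ₂ ^ 2 + Real.sin φ₂ ^ 2 * Real.cos ξ₂)) := by
  rintro x ⟨u, hu, v, hv, rfl⟩
  obtain ⟨m₁, hm₁, hm₁', hmc₁, rfl⟩ := hu
  obtain ⟨m₂, hm₂, hm₂', hmc₂, rfl⟩ := hv
  set x₁ := Real.cos φ₁ ^ 2 + Real.sin φ₁ ^ 2 * Real.cos ξ₁ with hx₁
  set x₂ := Real.cos φ₂ ^ 2 + Real.sin φ₂ ^ 2 * Real.cos ξ₂ with hx₂
  obtain ⟨hx₁l, hx₁u⟩ := cos_bound φ₁ ξ₁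
  obtain ⟨hx₂l, hx₂u⟩ := cos_bound φ₂ ξ₂
  have hnu : ‖qexp φ₁ m₁‖ = 1 := norm_qexp _ _ hm₁ hm₁'
  have hnv : ‖qexp φ₂ m₂‖ = 1 := norm_qexp _ _ hm₂ hm₂'
  have hnU₁ : ‖qexp φ₁ c₁‖ = 1 := norm_qexp _ _ hc₁ hc₁'
  have hnU₂ : ‖qexp φ₂ c₂‖ = 1 := norm_qexp _ _ hc₂ hc₂'
  -- the three points on S³
  set A := qexp φ₁ m₁ * qexp φ₂ m₂ with hA
  set B := qexp φ₁ c₁ * qexp φ₂ m₂ with hB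
  set C := qexp φ₁ c₁ * qexp φ₂ c₂ with hC
  have hnA : ‖A‖ = 1 := by rw [hA, norm_mul, hnu, hnv]; ring
  have hnB : ‖B‖ = 1 := by rw [hB, norm_mul, hnU₁, hnv]; ring
  have hnC : ‖C‖ = 1 := by rw [hC, norm_mul, hnU₁, hnU₂]; ring
  have hAB : qInner A B = qInner (qexp φ₁ m₁) (qexp φ₁ c₁) :=
    qInner_mul_right _ _ _ hnv
  have hBC : qInner B C = qInner (qexp φ₂ m₂) (qexp φ₂ c₂) :=
    qInner_mul_left _ _ _ hnU₁
  have hAB' : qInner A B ≥ x₁ := by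
    rw [hAB, qInner_qexp _ _ _ hm₁ hc₁, hx₁]
    nlinarith [sq_nonneg (Real.sin φ₁)]
  have hBC' : qInner B C ≥ x₂ := by
    rw [hBC, qInner_qexp _ _ _ hm₂ hc₂, hx₂]
    nlinarith [sq_nonneg (Real.sin φ₂)]
  -- arccos estimates
  have ha1 : Real.arccos (qInner A B) ≤ Real.arccos x₁ := arccos_anti hAB'
  have ha2 : Real.arccos (qInner B C) ≤ Real.arccos x₂ := arccos_anti hBC'
  have hkey := key_est A B C hnA hnB hnC
  refine ⟨hnA, ?_⟩
  have hmono : Real.cos (Real.arccos x₁ + Real.arccos x₂) ≤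
      Real.cos (Real.arccos (qInner A B) + Real.arccos (qInner B C)) := by
    apply Real.cos_le_cos_of_nonneg_of_le_pi
    · exact add_nonneg (Real.arccos_nonneg _) (Real.arccos_nonneg _)
    · exact hT.2
    · linarith
  linarith
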